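/- Let k be a field. The k-linear map D on Zorn vector matrices given by D(a, (v₁,v₂,v₃), (w₁,w₂,w₃), d) = (w₁, (d − a, 0, 0), (0, v₃, −v₂), −w₁) is a derivation for the Zorn product, i.e. D(x * y) = D(x) * y + x * D(y) for all x, y, and satisfies D ∘ D ∘ D = 0. -/

import Mathlib

open Matrix

/-- A Zorn vector matrix (split octonion) over `k`. -/
abbrev Zorn (k : Type*) := k × (Fin 3 → k) × (Fin 3 → k) × k

variable {k : Type*} [Field k]

/-- The Zorn product of two Zorn vector matrices. -/
def zmul (x y : Zorn k) : Zorn k :=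
  (x.1 * y.1 + x.2.1 ⬝ᵥ y.2.2.1,
   x.1 • y.2.1 + y.2.2.2 • x.2.1 - x.2.2.1 ⨯₃ y.2.2.1,
   y.1 • x.2.2.1 + x.2.2.2 • y.2.2.1 + x.2.1 ⨯₃ y.2.1,
   x.2.2.2 * y.2.2.2 + x.2.2.1 ⬝ᵥ y.2.1)

/-- The short-root vector `E_δ`:
`D(a, (v₁,v₂,v₃), (w₁,w₂,w₃), d) = (w₁, (d − a, 0, 0), (0, v₃, −v₂), −w₁)`. -/
def Dshort (x : Zorn k) : Zorn k :=
  (x.2.2.1 0, ![x.2.2.2 - x.1, 0, 0], ![0, x.2.1 2, -x.2.1 1], -x.2.2.1 0)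

/-- `Dshort` is a derivation for the Zorn product and cubes to zero. -/
theorem Dshort_derivation :
    (∀ x y : Zorn k, Dshort (zmul x y) = zmul (Dshort x) y + zmul x (Dshort y)) ∧
    (Dshort ∘ Dshort ∘ Dshort = (0 : Zorn k → Zorn k)) := by
  constructor
  · intro x y
    simp only [Dshort, zmul, cross_apply, dotProduct, Fin.sum_univ_three, Prod.mk_add_mk,
      Prod.ext_iff, Prod.fst_add, Prod.snd_add]
    refine ⟨?_, ?_, ?_, ?_⟩
    · simp [Matrix.vecHead, Matrix.vecTail, Pi.smul_apply, smul_eq_mul]; ring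
    · funext i; fin_cases i <;>
        simp [Matrix.vecHead, Matrix.vecTail, Pi.smul_apply, smul_eq_mul] <;> ring
    · funext i; fin_cases i <;>
        simp [Matrix.vecHead, Matrix.vecTail, Pi.smul_apply, smul_eq_mul] <;> ring
    · simp [Matrix.vecHead, Matrix.vecTail, Pi.smul_apply, smul_eq_mul]; ring
  · funext x
    simp only [Function.comp_apply, Dshort, Pi.zero_apply]
    refine Prod.ext (by simp) (Prod.ext ?_ (Prod.ext ?_ (by simp))) <;>
      funext i <;> fin_cases i <;> simp
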